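/- (Example: modified Nyström recovers the best rank-1 approximation.) Let K be the 3×3 symmetric matrix with rows (1, 0, 10), (0, 1.01, 0), (10, 0, 100), let C be the 3×2 matrix consisting of the first two columns of K, and let W = diag(1, 1.01). Then the matrix G with rows (1, 0, 10), (0, 0, 0), (10, 0, 100) is a best rank-1 approximation of CW⁻¹Cᵀ in the Frobenius norm, and G is also a best rank-1 approximation of K itself in the Frobenius norm, with ‖K − G‖_F = 1.01. -/

import Mathlib

open Matrix

/-- Frobenius norm of a real matrix: ‖A‖_F = sqrt(trace(Aᵀ A)). -/
noncomputable def frobNorm {α β : Type*} [Fintype α] [Fintype β] (A : Matrix α β ℝ) : ℝ :=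
  Real.sqrt (Matrix.trace (Aᵀ * A))

/-- The 3×3 kernel matrix of the example. -/
def K12 : Matrix (Fin 3) (Fin 3) ℝ :=
  !![1, 0, 10;
     0, 1.01, 0;
     10, 0, 100]

/-- The first two columns of K. -/
def C12 : Matrix (Fin 3) (Fin 2) ℝ :=
  !![1, 0;
     0, 1.01;
     10, 0]

/-- W = diag(1, 1.01). -/
def W12 : Matrix (Fin 2) (Fin 2) ℝ := !![1, 0; 0, 1.01]

/-- The output of the modified Nyström method on this example. -/
def G12 : Matrix (Fin 3) (Fin 3) ℝ :=
  !![1, 0, 10;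
     0, 0, 0;
     10, 0, 100]

section Aux

set_option linter.unnecessarySeqFocus false

private lemma aux_rank_le_one_exists (A : Matrix (Fin 3) (Fin 3) ℝ) (h : A.rank ≤ 1) :
    ∃ x y : Fin 3 → ℝ, ∀ i j, A i j = x i * y j := by
  rw [Matrix.rank] at h
  obtain ⟨v, hv⟩ := finrank_le_one_iff.mp h
  refine ⟨fun i => (v : Fin 3 → ℝ) i, fun j => Classical.choose (hv ⟨A *ᵥ Pi.single j 1,
    LinearMap.mem_range.mpr ⟨Pi.single j 1, rfl⟩⟩), fun i j => ?_⟩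
  have hc := Classical.choose_spec (hv ⟨A *ᵥ Pi.single j 1,
    LinearMap.mem_range.mpr ⟨Pi.single j 1, rfl⟩⟩)
  have h1 : (A *ᵥ Pi.single j 1) i = A i j := by
    simp [Matrix.mulVec, dotProduct, Pi.single_apply]
  have h2 := congrArg (fun w : ↥(LinearMap.range A.mulVecLin) => (w : Fin 3 → ℝ) i) hc
  simp only [Submodule.coe_smul, Pi.smul_apply, smul_eq_mul] at h2
  rw [← h1, ← h2]; ring

private lemma aux_key (x₀ x₁ x₂ y₀ y₁ y₂ : ℝ) :
    (x₀^2+x₁^2+x₂^2)*(y₀^2+y₁^2+y₂^2)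
      - 2*((x₀+10*x₂)*(y₀+10*y₂) + 1.01*(x₁*y₁)) + 10201 ≥ 0 := by
  set t := y₀^2+y₁^2+y₂^2 with ht
  rcases eq_or_lt_of_le (by positivity : (0:ℝ) ≤ t) with h0 | hpos
  · have hy0 : y₀ = 0 := by nlinarith [sq_nonneg y₀, sq_nonneg y₁, sq_nonneg y₂]
    have hy1 : y₁ = 0 := by nlinarith [sq_nonneg y₀, sq_nonneg y₁, sq_nonneg y₂]
    have hy2 : y₂ = 0 := by nlinarith [sq_nonneg y₀, sq_nonneg y₁, sq_nonneg y₂]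
    rw [hy0, hy1, hy2]; nlinarith
  · have h : 0 ≤ 101 * t * ((x₀^2+x₁^2+x₂^2)*t
        - 2*((x₀+10*x₂)*(y₀+10*y₂) + 1.01*(x₁*y₁)) + 10201) := by
      have e : 101 * t * ((x₀^2+x₁^2+x₂^2)*t
          - 2*((x₀+10*x₂)*(y₀+10*y₂) + 1.01*(x₁*y₁)) + 10201)
          = t^2*((10*x₀-x₂)^2 + 99.99*x₁^2)
            + (t*(x₀+10*x₂) - 101*(y₀+10*y₂))^2
            + 1.01*(t*x₁ - 101*y₁)^2
            + 10201*((10*y₀-y₂)^2 + 99.99*y₁^2) := by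
        rw [ht]; ring
      rw [e]; positivity
    nlinarith [h, hpos]

private def u12 : Fin 3 → ℝ := ![1, 0, 10]

private lemma aux_G12_rank : G12.rank ≤ 1 := by
  have h : G12 = replicateCol Unit u12 * replicateRow Unit u12 := by
    ext i j
    fin_cases i <;> fin_cases j <;>
      simp [G12, u12, Matrix.mul_apply, Matrix.replicateCol, Matrix.replicateRow, Matrix.vecHead,
        Matrix.vecTail] <;> norm_num
  rw [h]
  calc (replicateCol Unit u12 * replicateRow Unit u12).rank
      ≤ (replicateCol Unit u12).rank := Matrix.rank_mul_le_left _ _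
    _ ≤ Fintype.card Unit := Matrix.rank_le_card_width _
    _ = 1 := by simp

private lemma aux_Winv : W12⁻¹ = !![1, 0; 0, 100/101] := by
  apply Matrix.inv_eq_right_inv
  ext i j
  fin_cases i <;> fin_cases j <;>
    simp [W12, Matrix.mul_apply, Fin.sum_univ_two] <;> norm_num

private lemma aux_prod_eq : C12 * W12⁻¹ * C12ᵀ = K12 := by
  rw [aux_Winv]
  ext i j
  fin_cases i <;> fin_cases j <;>
    simp [C12, K12, Matrix.mul_apply, Fin.sum_univ_two, Fin.sum_univ_three,
      Matrix.transpose_apply, Matrix.vecHead, Matrix.vecTail] <;> norm_num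

private lemma aux_trace_eq (A : Matrix (Fin 3) (Fin 3) ℝ) :
    Matrix.trace (Aᵀ * A) = ∑ j : Fin 3, ∑ i : Fin 3, (A i j)^2 := by
  simp [Matrix.trace, Matrix.mul_apply, Matrix.diag, sq]

private lemma aux_trG12 : Matrix.trace ((K12 - G12)ᵀ * (K12 - G12)) = 1.0201 := by
  rw [aux_trace_eq]
  simp [Fin.sum_univ_three, Matrix.sub_apply, K12, G12]
  norm_num

private lemma aux_norm_G12 : frobNorm (K12 - G12) = 1.01 := by
  unfold frobNorm
  rw [aux_trG12, show (1.0201:ℝ) = 1.01^2 by norm_num]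
  exact Real.sqrt_sq (by norm_num)

private lemma aux_best (G' : Matrix (Fin 3) (Fin 3) ℝ) (h : G'.rank ≤ 1) :
    frobNorm (K12 - G12) ≤ frobNorm (K12 - G') := by
  obtain ⟨x, y, hxy⟩ := aux_rank_le_one_exists G' h
  have hS : Matrix.trace ((K12 - G')ᵀ * (K12 - G')) =
      (1 - x 0 * y 0)^2 + (0 - x 1 * y 0)^2 + (10 - x 2 * y 0)^2
      + (0 - x 0 * y 1)^2 + (1.01 - x 1 * y 1)^2 + (0 - x 2 * y 1)^2
      + (10 - x 0 * y 2)^2 + (0 - x 1 * y 2)^2 + (100 - x 2 * y 2)^2 := by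
    rw [aux_trace_eq]
    simp only [Fin.sum_univ_three, Matrix.sub_apply, hxy]
    simp [K12]
    norm_num
    ring
  have hge : (1.0201:ℝ) ≤ Matrix.trace ((K12 - G')ᵀ * (K12 - G')) := by
    rw [hS]
    nlinarith [aux_key (x 0) (x 1) (x 2) (y 0) (y 1) (y 2)]
  unfold frobNorm
  rw [aux_trG12]
  exact Real.sqrt_le_sqrt hge

end Aux

/-- The modified Nyström method recovers the best rank-1 approximation of K itself. -/
theorem stmt_12 :
    G12.rank ≤ 1 ∧
    (∀ G' : Matrix (Fin 3) (Fin 3) ℝ, G'.rank ≤ 1 →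
      frobNorm (C12 * W12⁻¹ * C12ᵀ - G12) ≤ frobNorm (C12 * W12⁻¹ * C12ᵀ - G')) ∧
    (∀ G' : Matrix (Fin 3) (Fin 3) ℝ, G'.rank ≤ 1 →
      frobNorm (K12 - G12) ≤ frobNorm (K12 - G')) ∧
    frobNorm (K12 - G12) = 1.01 := by
  refine ⟨aux_G12_rank, ?_, fun G' h => aux_best G' h, aux_norm_G12⟩
  intro G' h
  rw [aux_prod_eq]
  exact aux_best G' h
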